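/- Deterministic telescoping bound (fixed stepsize): let τ > 0, Π a nonempty closed convex set containing 0 in ℝⁿ, δ_t ∈ ℝⁿ arbitrary; define π_0 = 0 and π_{t+1} the minimizer over Π of π' ↦ −⟨δ_t, π'⟩ + (τ/2)‖π_t − π'‖². Then for any π ∈ Π and any N: ∑_{t=0}^{N−1} ⟨π − π_t, δ_t⟩ ≤ (τ/2)‖π‖² + ∑_{t=0}^{N−1} ‖δ_t‖²/(2τ). -/
import Mathlib


open RealInnerProductSpace

theorem telescoping_bound_fixed {n : ℕ}
    (S : Set (EuclideanSpace ℝ (Fin n)))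
    (hne : S.Nonempty) (hcl : IsClosed S) (hconv : Convex ℝ S)
    (h0 : (0 : EuclideanSpace ℝ (Fin n)) ∈ S)
    (τ : ℝ) (hτ : 0 < τ)
    (δ : ℕ → EuclideanSpace ℝ (Fin n))
    (πseq : ℕ → EuclideanSpace ℝ (Fin n))
    (hπ0 : πseq 0 = 0)
    (hπmem : ∀ t, πseq (t + 1) ∈ S)
    (hπmin : ∀ t, ∀ p ∈ S,
      -⟪δ t, πseq (t + 1)⟫ + τ / 2 * ‖πseq t - πseq (t + 1)‖ ^ 2 ≤
        -⟪δ t, p⟫ + τ / 2 * ‖πseq t - p‖ ^ 2) :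
    ∀ π ∈ S, ∀ N : ℕ,
      ∑ t ∈ Finset.range N, ⟪π - πseq t, δ t⟫ ≤
        τ / 2 * ‖π‖ ^ 2 + ∑ t ∈ Finset.range N, ‖δ t‖ ^ 2 / (2 * τ) := by
  intro π hπ N
  -- variational inequality
  have key : ∀ t, ⟪δ t, π - πseq (t+1)⟫ + τ * ⟪πseq t - πseq (t+1), π - πseq (t+1)⟫ ≤ 0 := by
    intro t
    set v := πseq (t+1) with hv
    set a := πseq t - v with ha
    set d := π - v with hd
    have hmain : ∀ s : ℝ, 0 < s → s ≤ 1 →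
        ⟪δ t, d⟫ + τ * ⟪a, d⟫ ≤ τ * s / 2 * ‖d‖^2 := by
      intro s hs hs1
      have hq : (1-s) • v + s • π ∈ S := hconv (hπmem t) hπ (by linarith) hs.le (by ring)
      have h := hπmin t _ hq
      have hqe : (1-s) • v + s • π = v + s • d := by
        rw [hd]; module
      rw [hqe] at h
      have e1 : ⟪δ t, v + s • d⟫ = ⟪δ t, v⟫ + s * ⟪δ t, d⟫ := by
        rw [inner_add_right, real_inner_smul_right]
      have e2 : πseq t - (v + s • d) = a - s • d := by rw [ha]; abel
      have e3 : ‖a - s • d‖^2 = ‖a‖^2 - 2*(s*⟪a,d⟫) + s^2*‖d‖^2 := by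
        rw [norm_sub_sq_real, real_inner_smul_right, norm_smul, mul_pow]
        simp [abs_of_pos hs]
      rw [e1, e2, e3] at h
      nlinarith [h, hs]
    have hD : 0 ≤ τ * ‖d‖^2 := by positivity
    have := le_of_forall_pos_le_add (a := ⟪δ t, d⟫ + τ * ⟪a, d⟫) (b := 0) ?_
    · exact this
    intro ε hε
    set s : ℝ := min 1 (2*ε/(τ*‖d‖^2 + 1)) with hsdef
    have hs0 : 0 < s := lt_min one_pos (by positivity)
    have hs1 : s ≤ 1 := min_le_left _ _
    have h := hmain s hs0 hs1
    have hs2 : s ≤ 2*ε/(τ*‖d‖^2 + 1) := min_le_right _ _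
    have h3 : τ * s / 2 * ‖d‖^2 ≤ ε := by
      have h4 : s * (τ*‖d‖^2 + 1) ≤ 2*ε := by
        have := (le_div_iff₀ (show (0:ℝ) < τ*‖d‖^2 + 1 by positivity)).mp hs2
        linarith
      nlinarith [hs0.le, hD]
    linarith
  -- per-step bound
  have step : ∀ t, ⟪π - πseq t, δ t⟫ ≤
      τ/2 * (‖πseq t - π‖^2 - ‖πseq (t+1) - π‖^2) + ‖δ t‖^2/(2*τ) := by
    intro t
    have h1 := key t
    have cs : ⟪δ t, πseq (t+1) - πseq t⟫ ≤ ‖δ t‖ * ‖πseq t - πseq (t+1)‖ := by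
      calc ⟪δ t, πseq (t+1) - πseq t⟫ ≤ ‖δ t‖ * ‖πseq (t+1) - πseq t‖ :=
              real_inner_le_norm _ _
        _ = ‖δ t‖ * ‖πseq t - πseq (t+1)‖ := by rw [norm_sub_rev]
    have e0 : ⟪π - πseq t, δ t⟫ =
        ⟪δ t, π - πseq (t+1)⟫ + ⟪δ t, πseq (t+1) - πseq t⟫ := by
      rw [real_inner_comm, ← inner_add_right]
      congr 1
      abel
    have e1 : ‖πseq t - π‖^2 = ‖πseq t - πseq (t+1)‖^2 +
        2*⟪πseq t - πseq (t+1), πseq (t+1) - π⟫ + ‖πseq (t+1) - π‖^2 := by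
      rw [show πseq t - π = (πseq t - πseq (t+1)) + (πseq (t+1) - π) by abel,
        norm_add_sq_real]
    have e2 : ⟪πseq t - πseq (t+1), π - πseq (t+1)⟫ =
        -⟪πseq t - πseq (t+1), πseq (t+1) - π⟫ := by
      rw [← inner_neg_right]
      congr 1
      abel
    have amgm : ‖δ t‖ * ‖πseq t - πseq (t+1)‖ ≤
        ‖δ t‖^2/(2*τ) + τ/2 * ‖πseq t - πseq (t+1)‖^2 := by
      have h5 : 0 ≤ (‖δ t‖ - τ * ‖πseq t - πseq (t+1)‖)^2 := sq_nonneg _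
      have h6 : 0 < 2*τ := by linarith
      have h7 : ‖δ t‖^2/(2*τ)*(2*τ) = ‖δ t‖^2 := div_mul_cancel₀ _ (ne_of_gt h6)
      nlinarith [h5, h6, h7, hτ]
    rw [e2] at h1
    rw [e0, e1]
    linarith [h1, cs, amgm]
  -- telescoping
  have main : ∀ M : ℕ, ∑ t ∈ Finset.range M, ⟪π - πseq t, δ t⟫ ≤
      τ/2 * (‖πseq 0 - π‖^2 - ‖πseq M - π‖^2) + ∑ t ∈ Finset.range M, ‖δ t‖^2/(2*τ) := by
    intro M
    induction M with
    | zero => simp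
    | succ M ih =>
      rw [Finset.sum_range_succ, Finset.sum_range_succ]
      have := step M
      linarith
  have := main N
  have hπ0' : ‖πseq 0 - π‖ = ‖π‖ := by rw [hπ0, zero_sub, norm_neg]
  rw [hπ0'] at this
  have hnn : 0 ≤ ‖πseq N - π‖^2 := sq_nonneg _
  nlinarith [hτ, hnn]
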